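/- arXiv:2412.13070 — 2 statements merged into one kernel-verified Lean document; each statement's English description precedes it below -/
import Mathlib

section
/- The scalar iteration σ_{k+1} = (1/2)σ_k(3 - σ_k²) converges to 1 for any initial σ₀ ∈ (0, √3), and the fixed points of the map in [0,∞) are exactly 0 and 1. -/
open Filter

lemma fix_aux (s : ℝ) (hs : 0 ≤ s) : 1 / 2 * s * (3 - s ^ 2) = s ↔ s = 0 ∨ s = 1 := by
  constructor
  · intro h
    have h0 : s * (s - 1) * (s + 1) = 0 := by nlinarith
    rcases mul_eq_zero.1 h0 with h1 | h1
    · rcases mul_eq_zero.1 h1 with h2 | h2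
      · exact Or.inl h2
      · exact Or.inr (by linarith)
    · exfalso; linarith
  · rintro (rfl | rfl) <;> ring

lemma le_one_aux (s : ℝ) (hs : -2 ≤ s) : 1 / 2 * s * (3 - s ^ 2) ≤ 1 := by
  nlinarith [mul_nonneg (sq_nonneg (s - 1)) (show (0:ℝ) ≤ s + 2 by linarith)]

/-- The scalar iteration `σ_{k+1} = (1/2)σ_k(3 - σ_k²)` converges to `1` for any
initial value `σ₀ ∈ (0, √3)`, and the fixed points of the map in `[0, ∞)` are
exactly `0` and `1`. -/
theorem stmt5 :
    (∀ σ : ℕ → ℝ, 0 < σ 0 → σ 0 < Real.sqrt 3 →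
      (∀ k, σ (k + 1) = 1 / 2 * σ k * (3 - σ k ^ 2)) →
      Tendsto σ atTop (nhds 1)) ∧
    (∀ s : ℝ, 0 ≤ s → (1 / 2 * s * (3 - s ^ 2) = s ↔ s = 0 ∨ s = 1)) := by
  constructor
  · intro σ h0 h3 hrec
    have hsq : σ 0 ^ 2 < 3 := by
      have h := Real.sq_sqrt (by norm_num : (0:ℝ) ≤ 3)
      nlinarith [Real.sqrt_nonneg 3]
    -- invariant: from index 1 on, σ k ∈ (0, 1]
    have key : ∀ k, 0 < σ (k + 1) ∧ σ (k + 1) ≤ 1 := by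
      intro k
      induction k with
      | zero =>
        rw [hrec 0]
        refine ⟨?_, le_one_aux _ (by linarith)⟩
        have : 0 < 3 - σ 0 ^ 2 := by linarith
        nlinarith
      | succ k ih =>
        obtain ⟨hp, hl⟩ := ih
        rw [hrec (k + 1)]
        refine ⟨?_, le_one_aux _ (by linarith)⟩
        have : σ (k + 1) ^ 2 ≤ 1 := by nlinarith
        nlinarith
    set τ : ℕ → ℝ := fun k => σ (k + 1) with hτ
    have hmono : Monotone τ := by
      apply monotone_nat_of_le_succ
      intro k
      obtain ⟨hp, hl⟩ := key k
      have : τ (k + 1) = 1 / 2 * τ k * (3 - τ k ^ 2) := hrec (k + 1)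
      have h1 : 0 ≤ 1 - τ k ^ 2 := by simp only [hτ]; nlinarith
      have h2 : (0:ℝ) ≤ τ k * (1 - τ k ^ 2) := mul_nonneg hp.le h1
      nlinarith
    have hbdd : BddAbove (Set.range τ) := by
      refine ⟨1, ?_⟩
      rintro x ⟨k, rfl⟩
      exact (key k).2
    have hconv : Tendsto τ atTop (nhds (⨆ k, τ k)) := tendsto_atTop_ciSup hmono hbdd
    set L := ⨆ k, τ k with hL
    have hLpos : 0 < L := lt_of_lt_of_le (key 0).1 (le_ciSup hbdd 0)
    have h1 : Tendsto (fun k => τ (k + 1)) atTop (nhds L) :=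
      (tendsto_add_atTop_iff_nat 1).2 hconv
    have h2 : Tendsto (fun k => 1 / 2 * τ k * (3 - τ k ^ 2)) atTop
        (nhds (1 / 2 * L * (3 - L ^ 2))) := by
      have hc : Continuous fun x : ℝ => 1 / 2 * x * (3 - x ^ 2) := by continuity
      exact (hc.tendsto L).comp hconv
    have heq : (fun k => τ (k + 1)) = fun k => 1 / 2 * τ k * (3 - τ k ^ 2) := by
      funext k; exact hrec (k + 1)
    have hfix : 1 / 2 * L * (3 - L ^ 2) = L :=
      tendsto_nhds_unique h2 (heq ▸ h1)
    have hL1 : L = 1 := by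
      rcases (fix_aux L hLpos.le).1 hfix with h | h
      · exact absurd h hLpos.ne'
      · exact h
    have : Tendsto σ atTop (nhds L) := (tendsto_add_atTop_iff_nat 1).1 hconv
    rwa [hL1] at this
  · exact fix_aux
end

section
/- For every γ > 0 and τ > 0, the function φ(x) = x|x|^γ/(τ^γ + |x|^γ) is continuous, odd, satisfies |φ(x)| ≤ |x|, and is monotonically nondecreasing when γ ≤ 2... specifically, for γ ∈ (0, 2], φ is nondecreasing on ℝ. -/
/-- For `τ > 0` and `γ ∈ (0, 2]`, the function `φ(x) = x|x|^γ/(τ^γ + |x|^γ)` is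
continuous, odd, satisfies `|φ(x)| ≤ |x|`, and is nondecreasing on `ℝ`. -/
theorem stmt9 (τ γ : ℝ) (hτ : 0 < τ) (hγ : 0 < γ) (hγ2 : γ ≤ 2) :
    Continuous (fun x : ℝ => x * |x| ^ γ / (τ ^ γ + |x| ^ γ)) ∧
    (∀ x : ℝ, (-x) * |(-x)| ^ γ / (τ ^ γ + |(-x)| ^ γ)
      = -(x * |x| ^ γ / (τ ^ γ + |x| ^ γ))) ∧
    (∀ x : ℝ, |x * |x| ^ γ / (τ ^ γ + |x| ^ γ)| ≤ |x|) ∧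
    Monotone (fun x : ℝ => x * |x| ^ γ / (τ ^ γ + |x| ^ γ)) := by
  have ht : (0:ℝ) < τ ^ γ := Real.rpow_pos_of_pos hτ γ
  have hden : ∀ x : ℝ, 0 < τ ^ γ + |x| ^ γ := fun x =>
    add_pos_of_pos_of_nonneg ht (Real.rpow_nonneg (abs_nonneg x) γ)
  refine ⟨?_, ?_, ?_, ?_⟩
  · apply Continuous.div
    · exact continuous_id.mul (continuous_abs.rpow_const fun x => Or.inr hγ.le)
    · exact continuous_const.add (continuous_abs.rpow_const fun x => Or.inr hγ.le)
    · exact fun x => (hden x).ne'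
  · intro x; rw [abs_neg]; ring
  · intro x
    rw [abs_div, abs_mul, abs_of_nonneg (Real.rpow_nonneg (abs_nonneg x) γ),
      abs_of_pos (hden x), div_le_iff₀ (hden x)]
    nlinarith [abs_nonneg x, Real.rpow_nonneg (abs_nonneg x) γ, ht,
      mul_nonneg (abs_nonneg x) ht.le]
  · have key : ∀ x y : ℝ, 0 ≤ x → x ≤ y →
        x * |x| ^ γ / (τ ^ γ + |x| ^ γ) ≤ y * |y| ^ γ / (τ ^ γ + |y| ^ γ) := by
      intro x y hx hxy
      have hy : 0 ≤ y := hx.trans hxy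
      rw [abs_of_nonneg hx, abs_of_nonneg hy]
      have hxg : (0:ℝ) ≤ x ^ γ := Real.rpow_nonneg hx γ
      have hyg : (0:ℝ) ≤ y ^ γ := Real.rpow_nonneg hy γ
      have hxyg : x ^ γ ≤ y ^ γ := Real.rpow_le_rpow hx hxy hγ.le
      rw [div_le_div_iff₀ (add_pos_of_pos_of_nonneg ht hxg)
        (add_pos_of_pos_of_nonneg ht hyg)]
      have h1 : x * x ^ γ ≤ y * y ^ γ := mul_le_mul hxy hxyg hxg hy
      nlinarith [mul_le_mul_of_nonneg_right h1 ht.le,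
        mul_le_mul_of_nonneg_right hxy (mul_nonneg hxg hyg)]
    intro x y hxy
    simp only
    rcases le_or_gt 0 x with hx | hx
    · exact key x y hx hxy
    rcases le_or_gt 0 y with hy | hy
    · have h1 : x * |x| ^ γ / (τ ^ γ + |x| ^ γ) ≤ 0 :=
        div_nonpos_of_nonpos_of_nonneg
          (mul_nonpos_of_nonpos_of_nonneg hx.le (Real.rpow_nonneg (abs_nonneg x) γ))
          (hden x).le
      have h2 : 0 ≤ y * |y| ^ γ / (τ ^ γ + |y| ^ γ) :=
        div_nonneg (mul_nonneg hy (Real.rpow_nonneg (abs_nonneg y) γ)) (hden y).le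
      linarith
    · have := key (-y) (-x) (by linarith) (by linarith)
      simp only [abs_neg, neg_mul, neg_div] at this
      linarith
end
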